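/- arXiv:2010.07254 — 4 statements merged into one kernel-verified Lean document; each statement's English description precedes it below -/
import Mathlib

section
/- Let k ≥ 1, m ≥ 1, ℓ ≥ 0 be integers and set n = m + k + ℓ. Let z be an (m+k) × ℓ real matrix, let Z = (𝕀_{m+k} | z) be the (m+k) × n real matrix whose first m+k columns form the identity matrix and whose last ℓ columns are z, and let Y be a k × (m+k) real matrix of rank k. Let A be the (n−m) × n real matrix whose first ℓ rows form the block matrix (−zᵀ | 𝕀_ℓ) and whose last k rows form the block matrix (Y | 0_{k×ℓ}). Then A has rank n − m, and the row span of A equals the preimage Z⁻¹(rowspan Y) = {x ∈ ℝⁿ : Zx lies in the row span of Y, viewed as a subspace of ℝ^{m+k}}. In particular, the first ℓ rows of A form a basis of ker Z. -/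
/-- Remark 4.4(ii)-(iii): with `Z = (𝕀_{m+k} | z)` and
`A = [ -zᵀ | 𝕀_ℓ ; Y | 0 ]` (first `ℓ` rows `(-zᵀ | 𝕀_ℓ)`, last `k` rows `(Y | 0)`),
the matrix `A` has rank `ℓ + k = n - m`, its row span equals the preimage under `Z` of the
row span of `Y`, and its first `ℓ` rows form a basis of `ker Z`. Here `ℝⁿ` is realized with
coordinates indexed by `Fin (m+k) ⊕ Fin ℓ` (first `m+k` coordinates, then the last `ℓ`). -/
theorem stmt_3 (k m ℓ : ℕ) (hk : 1 ≤ k) (hm : 1 ≤ m)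
    (z : Matrix (Fin (m + k)) (Fin ℓ) ℝ) (Y : Matrix (Fin k) (Fin (m + k)) ℝ)
    (hY : Y.rank = k)
    (Z : Matrix (Fin (m + k)) (Fin (m + k) ⊕ Fin ℓ) ℝ)
    (hZ : Z = Matrix.fromCols 1 z)
    (A : Matrix (Fin ℓ ⊕ Fin k) (Fin (m + k) ⊕ Fin ℓ) ℝ)
    (hA : A = Matrix.fromRows (Matrix.fromCols (-(Matrix.transpose z)) 1) (Matrix.fromCols Y 0)) :
    A.rank = ℓ + k ∧
    Submodule.span ℝ (Set.range (fun i : Fin ℓ ⊕ Fin k => A i)) =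
      Submodule.comap Z.mulVecLin
        (Submodule.span ℝ (Set.range (fun a : Fin k => Y a))) ∧
    LinearIndependent ℝ (fun i : Fin ℓ => A (Sum.inl i)) ∧
    Submodule.span ℝ (Set.range (fun i : Fin ℓ => A (Sum.inl i))) =
      LinearMap.ker Z.mulVecLin := by
  classical
  subst hZ hA
  set A : Matrix (Fin ℓ ⊕ Fin k) (Fin (m + k) ⊕ Fin ℓ) ℝ :=
    Matrix.fromRows (Matrix.fromCols (-(Matrix.transpose z)) 1) (Matrix.fromCols Y 0) with hA
  -- entries of A
  have hA_il : ∀ i a, A (Sum.inl i) (Sum.inl a) = -z a i := by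
    intro i a; simp [hA, Matrix.fromRows_apply_inl, Matrix.fromRows_apply_inr, Matrix.fromCols_apply_inl, Matrix.fromCols_apply_inr]
  have hA_ir : ∀ i j, A (Sum.inl i) (Sum.inr j) = if i = j then 1 else 0 := by
    intro i j; simp [hA, Matrix.fromRows_apply_inl, Matrix.fromRows_apply_inr, Matrix.fromCols_apply_inl, Matrix.fromCols_apply_inr, Matrix.one_apply]
  have hA_rl : ∀ b a, A (Sum.inr b) (Sum.inl a) = Y b a := by
    intro b a; simp [hA, Matrix.fromRows_apply_inl, Matrix.fromRows_apply_inr, Matrix.fromCols_apply_inl, Matrix.fromCols_apply_inr]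
  have hA_rr : ∀ b j, A (Sum.inr b) (Sum.inr j) = 0 := by
    intro b j; simp [hA, Matrix.fromRows_apply_inl, Matrix.fromRows_apply_inr, Matrix.fromCols_apply_inl, Matrix.fromCols_apply_inr]
  -- mulVec formula
  have hZmv : ∀ x : (Fin (m + k) ⊕ Fin ℓ) → ℝ,
      (Matrix.fromCols 1 z).mulVec x =
        fun r => x (Sum.inl r) + ∑ j, z r j * x (Sum.inr j) := by
    intro x
    funext r
    simp [Matrix.mulVec, dotProduct, Fintype.sum_sum_type,
      Matrix.fromCols, Matrix.one_apply, ite_mul]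
  -- Z of rows
  have hZ_inl : ∀ i, (Matrix.fromCols 1 z).mulVec (A (Sum.inl i)) = 0 := by
    intro i
    rw [hZmv]
    funext r
    simp [hA_il, hA_ir, mul_ite]
  have hZ_inr : ∀ b, (Matrix.fromCols 1 z).mulVec (A (Sum.inr b)) = Y b := by
    intro b
    rw [hZmv]
    funext r
    simp [hA_rl, hA_rr]
  -- rows of Y linearly independent
  have hYind : LinearIndependent ℝ (fun a : Fin k => Y a) := by
    rw [linearIndependent_iff_card_eq_finrank_span]
    rw [Set.finrank, show (fun a : Fin k => Y a) = Y.row from rfl, ← Matrix.rank_eq_finrank_span_row, hY, Fintype.card_fin]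
  -- rows of A linearly independent
  have hAind : LinearIndependent ℝ (fun i : Fin ℓ ⊕ Fin k => A i) := by
    rw [Fintype.linearIndependent_iff]
    intro g hg
    have hgl : ∀ j, g (Sum.inl j) = 0 := by
      intro j
      have := congrFun hg (Sum.inr j)
      simpa [Fintype.sum_sum_type, hA_ir, hA_rr, mul_ite,
        Finset.sum_ite_eq' Finset.univ j (fun i => g (Sum.inl i))] using this
    have hgr : ∀ b, g (Sum.inr b) = 0 := by
      have h0 : ∑ b, g (Sum.inr b) • Y b = 0 := by
        funext a
        have := congrFun hg (Sum.inl a)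
        simp only [Fintype.sum_sum_type, Finset.sum_apply, Pi.smul_apply,
          smul_eq_mul, hA_il, hA_rl, Pi.zero_apply] at this ⊢
        simp only [hgl, zero_mul, Finset.sum_const_zero, zero_add] at this
        simpa using this
      intro b
      exact Fintype.linearIndependent_iff.mp hYind (fun b => g (Sum.inr b)) h0 b
    intro i
    cases i with
    | inl j => exact hgl j
    | inr b => exact hgr b
  have hAind_l : LinearIndependent ℝ (fun i : Fin ℓ => A (Sum.inl i)) :=
    hAind.comp Sum.inl Sum.inl_injective
  -- kernel
  have hkerspan : Submodule.span ℝ (Set.range (fun i : Fin ℓ => A (Sum.inl i))) =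
      LinearMap.ker (Matrix.fromCols 1 z).mulVecLin := by
    apply le_antisymm
    · rw [Submodule.span_le]
      rintro _ ⟨i, rfl⟩
      simp [LinearMap.mem_ker, Matrix.mulVecLin_apply, hZ_inl i]
    · intro x hx
      rw [LinearMap.mem_ker, Matrix.mulVecLin_apply, hZmv] at hx
      have hx' : ∀ r, x (Sum.inl r) = -∑ j, z r j * x (Sum.inr j) := by
        intro r
        have := congrFun hx r
        simpa [eq_neg_iff_add_eq_zero] using this
      have hxe : x = ∑ j, x (Sum.inr j) • A (Sum.inl j) := by
        funext c
        cases c with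
        | inl a =>
          simp only [Finset.sum_apply, Pi.smul_apply, smul_eq_mul, hA_il, hx' a]
          rw [← Finset.sum_neg_distrib]
          congr 1; funext j; ring
        | inr j =>
          simp [hA_ir, mul_ite]
      rw [hxe]
      exact Submodule.sum_mem _ fun j _ =>
        Submodule.smul_mem _ _ (Submodule.subset_span ⟨j, rfl⟩)
  -- span = comap
  have hspan : Submodule.span ℝ (Set.range (fun i : Fin ℓ ⊕ Fin k => A i)) =
      Submodule.comap (Matrix.fromCols 1 z).mulVecLin
        (Submodule.span ℝ (Set.range (fun a : Fin k => Y a))) := by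
    apply le_antisymm
    · rw [Submodule.span_le]
      rintro _ ⟨i, rfl⟩
      cases i with
      | inl j =>
        simp only [SetLike.mem_coe, Submodule.mem_comap, Matrix.mulVecLin_apply, hZ_inl j]
        exact Submodule.zero_mem _
      | inr b =>
        simp only [SetLike.mem_coe, Submodule.mem_comap, Matrix.mulVecLin_apply, hZ_inr b]
        exact Submodule.subset_span ⟨b, rfl⟩
    · intro x hx
      simp only [Submodule.mem_comap] at hx
      obtain ⟨c, hc⟩ := (Finsupp.mem_span_range_iff_exists_finsupp (v := fun a : Fin k => Y a)).mp hx
      set y : (Fin (m + k) ⊕ Fin ℓ) → ℝ := ∑ b, c b • A (Sum.inr b) with hy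
      have hyA : y ∈ Submodule.span ℝ (Set.range (fun i : Fin ℓ ⊕ Fin k => A i)) :=
        Submodule.sum_mem _ fun b _ =>
          Submodule.smul_mem _ _ (Submodule.subset_span ⟨Sum.inr b, rfl⟩)
      have hZy : (Matrix.fromCols 1 z).mulVecLin y = (Matrix.fromCols 1 z).mulVecLin x := by
        rw [hy, map_sum, ← hc, Finsupp.sum_fintype]
        · simp only [map_smul, Matrix.mulVecLin_apply, hZ_inr]
        · intro b; simp
      have hker : x - y ∈ LinearMap.ker (Matrix.fromCols 1 z).mulVecLin := by
        rw [LinearMap.mem_ker, map_sub, hZy, sub_self]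
      rw [← hkerspan] at hker
      have hsub : Submodule.span ℝ (Set.range (fun i : Fin ℓ => A (Sum.inl i))) ≤
          Submodule.span ℝ (Set.range (fun i : Fin ℓ ⊕ Fin k => A i)) := by
        apply Submodule.span_mono
        rintro _ ⟨i, rfl⟩; exact ⟨Sum.inl i, rfl⟩
      have := Submodule.add_mem _ (hsub hker) hyA
      simpa using this
  refine ⟨?_, hspan, hAind_l, hkerspan⟩
  rw [LinearIndependent.rank_matrix (M := A) hAind]
  simp
end

section
/- Fix integers k ≥ 1 and m ≥ 0 and set N = m + k. Let Y be an N × k real matrix with columns Y₁, …, Y_k, and let P₁, …, P_k be N × (m+1) real matrices. For α, β ∈ [k] define ⟨Y^⊥_α P_β⟩ := (−1)^{α−1} times the determinant of the N × N matrix whose first k−1 columns are Y₁, …, Y_k with Y_α omitted, followed by the m+1 columns of P_β; define ⟨Y P₁ ∩ ⋯ ∩ P_k⟩ := det of the k × k matrix with (α, β) entry ⟨Y^⊥_α P_β⟩; and define v_{P_α} := Σ_{β=1}^{k} ⟨Y^⊥_β P_α⟩ · Y_β ∈ ℝ^N. Then: (a) each v_{P_α} lies in the intersection of the column span of Y and the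 column span of P_α; (b) ⟨Y P₁ ∩ ⋯ ∩ P_k⟩ equals the determinant of the k × k matrix of coefficients expressing v_{P₁}, …, v_{P_k} in terms of Y₁, …, Y_k; and (c) if Y has rank k, then ⟨Y P₁ ∩ ⋯ ∩ P_k⟩ = 0 if and only if the vectors v_{P₁}, …, v_{P_k} are linearly dependent. -/
/-- The index in `Fin k` of the `j`-th remaining column after omitting column `α`
from the list of `k` columns. -/
def omitIdx {k : ℕ} (hk : 1 ≤ k) (α : Fin k) (j : Fin (k - 1)) : Fin k :=
  Fin.cast (by omega) ((Fin.cast (by omega : k = k - 1 + 1) α).succAbove j)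

/-- Definition 5.1: the covariant bracket `⟨Y^⊥_α B⟩`, i.e. `(−1)^{α−1}` times the
determinant of the `(m+k) × (m+k)` matrix whose first `k−1` columns are the columns of `Y`
with the `α`-th one omitted, followed by the `m+1` columns of `B`. (Here `α : Fin k` is
`0`-indexed, so the sign is `(−1)^{(α : ℕ)}`.) -/
noncomputable def Ybracket {k m : ℕ} (hk : 1 ≤ k)
    (Y : Matrix (Fin (m + k)) (Fin k) ℝ) (α : Fin k)
    (B : Matrix (Fin (m + k)) (Fin (m + 1)) ℝ) : ℝ :=
  (-1 : ℝ) ^ (α : ℕ) *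
    (Matrix.of fun (r : Fin (m + k)) (c : Fin (m + k)) =>
      Sum.elim (fun j : Fin (k - 1) => Y r (omitIdx hk α j))
        (fun j : Fin (m + 1) => B r j)
        (finSumFinEquiv.symm (Fin.cast (by omega : m + k = k - 1 + (m + 1)) c))).det

lemma val_succAbove {n : ℕ} (p : Fin (n+1)) (q : Fin n) :
    ((p.succAbove q : Fin (n+1)) : ℕ) = if (q:ℕ) < (p:ℕ) then (q:ℕ) else (q:ℕ)+1 := by
  rw [Fin.succAbove]
  split_ifs with h h2 h3 <;> simp_all [Fin.lt_def]

lemma symm_eval {a b : ℕ} (x : Fin (a+b)) :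
    finSumFinEquiv.symm x =
      if h : (x:ℕ) < a then Sum.inl ⟨x, h⟩ else Sum.inr ⟨(x:ℕ) - a, by omega⟩ := by
  rw [Equiv.symm_apply_eq]
  split_ifs with h
  · rw [finSumFinEquiv_apply_left]; exact Fin.ext rfl
  · rw [finSumFinEquiv_apply_right]
    have := x.isLt
    exact Fin.ext (by simp [Fin.natAdd]; omega)

/-- Laplace-type identity: for `n+1` vectors in `ℝ^n`, the alternating sum of each vector
times the determinant of the others vanishes. -/
lemma keyIdentity (n : ℕ) (w : Fin (n+1) → Fin n → ℝ) (r : Fin n) :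
    ∑ j : Fin (n+1), (-1:ℝ)^(j:ℕ) * w j r * (Matrix.of fun p q => w (j.succAbove q) p).det = 0 := by
  set A : Matrix (Fin (n+1)) (Fin (n+1)) ℝ :=
    Matrix.of (Fin.cons (fun c => w c r) (fun i c => w c i)) with hA
  have h0 : A.det = 0 :=
    Matrix.det_zero_of_row_eq (Fin.succ_ne_zero r).symm (by funext c; simp [hA])
  have h2 : ∀ j : Fin (n+1),
      (Matrix.of fun p q => w (j.succAbove q) p) = A.submatrix Fin.succ j.succAbove := by
    intro j; ext p q; simp [hA]
  calc ∑ j : Fin (n+1), (-1:ℝ)^(j:ℕ) * w j r * (Matrix.of fun p q => w (j.succAbove q) p).det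
      = A.det := by
        rw [Matrix.det_succ_row_zero]
        refine Finset.sum_congr rfl fun j _ => ?_
        rw [h2 j]; simp [hA]
    _ = 0 := h0

/-- The bracket `⟨Y^⊥_β B⟩` equals `(-1)^β` times the determinant obtained by deleting the
`β`-th column from the full `(m+k+1)`-tuple of columns `Y₁,…,Y_k,B₁,…,B_{m+1}`. -/
lemma Dmatch (k m : ℕ) (hk : 1 ≤ k)
    (Y : Matrix (Fin (m + k)) (Fin k) ℝ) (B : Matrix (Fin (m + k)) (Fin (m + 1)) ℝ)
    (β : Fin k) (w : Fin (m+k+1) → Fin (m+k) → ℝ)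
    (hwv : ∀ (i : Fin (m+k+1)) (r : Fin (m+k)), w i r =
      if h : (i:ℕ) < k then Y r ⟨i, h⟩ else B r ⟨(i:ℕ) - k, by omega⟩)
    (jβ : Fin (m+k+1)) (hjβ : (jβ:ℕ) = (β:ℕ)) :
    Ybracket hk Y β B =
      (-1:ℝ)^(β:ℕ) * (Matrix.of fun p q => w (jβ.succAbove q) p).det := by
  unfold Ybracket
  congr 1
  refine congrArg Matrix.det ?_
  ext p q
  have hq := q.isLt
  have hβ := β.isLt
  simp only [Matrix.of_apply]
  rw [hwv]
  simp only [Matrix.of_apply, symm_eval, Fin.coe_cast, val_succAbove, hjβ]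
  split_ifs <;>
    first
      | omega
      | (simp only [Sum.elim_inl, Sum.elim_inr];
          apply congrArg; apply Fin.ext; simp [omitIdx, val_succAbove]; omega)

/-- Proposition 5.2: with `⟨Y P₁ ∩ ⋯ ∩ P_k⟩ := det(⟨Y^⊥_α P_β⟩)_{α,β}` and
`v_{P_α} := Σ_β ⟨Y^⊥_β P_α⟩ · Y_β`:
(a) each `v_{P_α}` lies in (colspan Y) ∩ (colspan P_α);
(b) `⟨Y P₁ ∩ ⋯ ∩ P_k⟩` equals the determinant of the matrix of coefficients expressing
`v_{P₁}, …, v_{P_k}` in terms of the columns `Y₁, …, Y_k`;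
(c) if `Y` has rank `k`, then `⟨Y P₁ ∩ ⋯ ∩ P_k⟩ = 0` iff `v_{P₁}, …, v_{P_k}` are
linearly dependent. -/
theorem stmt_6 (k m : ℕ) (hk : 1 ≤ k)
    (Y : Matrix (Fin (m + k)) (Fin k) ℝ)
    (P : Fin k → Matrix (Fin (m + k)) (Fin (m + 1)) ℝ) :
    (∀ α : Fin k,
      (fun r : Fin (m + k) => ∑ β : Fin k, Ybracket hk Y β (P α) * Y r β) ∈
        Submodule.span ℝ (Set.range (fun β : Fin k => fun r : Fin (m + k) => Y r β)) ⊓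
          Submodule.span ℝ
            (Set.range (fun c : Fin (m + 1) => fun r : Fin (m + k) => P α r c))) ∧
    (Matrix.of fun α β : Fin k => Ybracket hk Y α (P β)).det =
      (Matrix.of fun α β : Fin k => Ybracket hk Y β (P α)).det ∧
    (Y.rank = k →
      ((Matrix.of fun α β : Fin k => Ybracket hk Y α (P β)).det = 0 ↔
        ¬ LinearIndependent ℝ (fun α : Fin k =>
            fun r : Fin (m + k) => ∑ β : Fin k, Ybracket hk Y β (P α) * Y r β))) := by
  classical
  -- Part (b)
  have hb : (Matrix.of fun α β : Fin k => Ybracket hk Y α (P β)).det =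
      (Matrix.of fun α β : Fin k => Ybracket hk Y β (P α)).det := by
    have ht : (Matrix.of fun α β : Fin k => Ybracket hk Y α (P β))
        = Matrix.transpose (Matrix.of fun α β : Fin k => Ybracket hk Y β (P α)) := rfl
    rw [ht, Matrix.det_transpose]
  -- The key consequence of the Laplace identity: each `v_{P_α}` is a combination of
  -- the columns of `P_α`.
  have key : ∀ (α : Fin k), ∃ c : Fin (m+1) → ℝ, ∀ r : Fin (m+k),
      ∑ β : Fin k, Ybracket hk Y β (P α) * Y r β = ∑ j : Fin (m+1), c j * P α r j := by
    intro α
    set w : Fin (m+k+1) → Fin (m+k) → ℝ :=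
      fun i r =>
        if h : (i:ℕ) < k then Y r ⟨i, h⟩ else P α r ⟨(i:ℕ) - k, by omega⟩ with hw
    have hwv : ∀ (i : Fin (m+k+1)) (r : Fin (m+k)), w i r =
        if h : (i:ℕ) < k then Y r ⟨i, h⟩ else P α r ⟨(i:ℕ) - k, by omega⟩ :=
      fun i r => rfl
    set e : Fin k ⊕ Fin (m+1) ≃ Fin (m+k+1) :=
      finSumFinEquiv.trans (finCongr (by omega)) with he
    have hel : ∀ β : Fin k, ((e (Sum.inl β) : Fin (m+k+1)) : ℕ) = (β : ℕ) := by
      intro β; simp [he]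
    have her : ∀ j : Fin (m+1), ((e (Sum.inr j) : Fin (m+k+1)) : ℕ) = k + (j : ℕ) := by
      intro j; simp [he]
    set D : Fin (m+k+1) → ℝ :=
      fun i => (Matrix.of fun p q => w (i.succAbove q) p).det with hD
    refine ⟨fun j => -((-1:ℝ)^((e (Sum.inr j) : Fin (m+k+1)) : ℕ) * D (e (Sum.inr j))), ?_⟩
    intro r
    have hid := keyIdentity (m+k) w r
    rw [← Equiv.sum_comp e
        (fun j : Fin (m+k+1) =>
          (-1:ℝ)^(j:ℕ) * w j r * (Matrix.of fun p q => w (j.succAbove q) p).det),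
      Fintype.sum_sum_type] at hid
    have hL : ∀ β : Fin k,
        (-1:ℝ)^((e (Sum.inl β) : Fin (m+k+1)) : ℕ) * w (e (Sum.inl β)) r *
          (Matrix.of fun p q => w ((e (Sum.inl β)).succAbove q) p).det
        = Ybracket hk Y β (P α) * Y r β := by
      intro β
      have h1 : w (e (Sum.inl β)) r = Y r β := by
        rw [hwv, dif_pos (by rw [hel]; exact β.isLt)]
        exact congrArg _ (Fin.ext (hel β))
      rw [h1, hel β, Dmatch k m hk Y (P α) β w hwv (e (Sum.inl β)) (hel β)]
      ring
    have hR : ∀ j : Fin (m+1),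
        (-1:ℝ)^((e (Sum.inr j) : Fin (m+k+1)) : ℕ) * w (e (Sum.inr j)) r *
          (Matrix.of fun p q => w ((e (Sum.inr j)).succAbove q) p).det
        = ((-1:ℝ)^((e (Sum.inr j) : Fin (m+k+1)) : ℕ) * D (e (Sum.inr j))) * P α r j := by
      intro j
      have h1 : w (e (Sum.inr j)) r = P α r j := by
        rw [hwv, dif_neg (by rw [her]; omega)]
        exact congrArg _ (Fin.ext (show ((e (Sum.inr j) : Fin (m+k+1)) : ℕ) - k = (j:ℕ) by
          rw [her]; omega))
      rw [h1, hD]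
      ring
    rw [Finset.sum_congr rfl (fun β _ => hL β),
      Finset.sum_congr rfl (fun j _ => hR j)] at hid
    have hneg : ∑ j : Fin (m+1),
        -((-1:ℝ)^((e (Sum.inr j) : Fin (m+k+1)) : ℕ) * D (e (Sum.inr j))) * P α r j
        = - ∑ j : Fin (m+1),
            ((-1:ℝ)^((e (Sum.inr j) : Fin (m+k+1)) : ℕ) * D (e (Sum.inr j))) * P α r j := by
      rw [← Finset.sum_neg_distrib]
      exact Finset.sum_congr rfl fun j _ => by ring
    rw [hneg]
    linarith [hid]
  -- Part (a)
  refine ⟨fun α => Submodule.mem_inf.mpr ⟨?_, ?_⟩, hb, ?_⟩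
  · have h1 : (fun r : Fin (m + k) => ∑ β : Fin k, Ybracket hk Y β (P α) * Y r β)
        = ∑ β : Fin k, Ybracket hk Y β (P α) • (fun r : Fin (m+k) => Y r β) := by
      funext r; simp [Finset.sum_apply]
    rw [h1]
    exact Submodule.sum_mem _ fun β _ =>
      Submodule.smul_mem _ _ (Submodule.subset_span ⟨β, rfl⟩)
  · obtain ⟨c, hc⟩ := key α
    have h1 : (fun r : Fin (m + k) => ∑ β : Fin k, Ybracket hk Y β (P α) * Y r β)
        = ∑ j : Fin (m+1), c j • (fun r : Fin (m+k) => P α r j) := by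
      funext r; simp [Finset.sum_apply, hc r]
    rw [h1]
    exact Submodule.sum_mem _ fun j _ =>
      Submodule.smul_mem _ _ (Submodule.subset_span ⟨j, rfl⟩)
  -- Part (c)
  · intro hrank
    set M : Matrix (Fin k) (Fin k) ℝ :=
      Matrix.of fun α β : Fin k => Ybracket hk Y β (P α) with hM
    have hker : LinearMap.ker Y.mulVecLin = ⊥ := by
      have h1 := LinearMap.finrank_range_add_finrank_ker Y.mulVecLin
      have hr : Module.finrank ℝ (LinearMap.range Y.mulVecLin) = k := hrank
      have hd : Module.finrank ℝ (Fin k → ℝ) = k := by simp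
      have h0 : Module.finrank ℝ (LinearMap.ker Y.mulVecLin) = 0 := by omega
      exact Submodule.finrank_eq_zero.mp h0
    have hv : (fun α : Fin k => fun r : Fin (m + k) =>
          ∑ β : Fin k, Ybracket hk Y β (P α) * Y r β)
        = (Y.mulVecLin ∘ fun α : Fin k => M α) := by
      funext α r
      simp [Matrix.mulVecLin_apply, Matrix.mulVec, dotProduct, hM, mul_comm]
    have hli : LinearIndependent ℝ (fun α : Fin k => fun r : Fin (m + k) =>
          ∑ β : Fin k, Ybracket hk Y β (P α) * Y r β)
        ↔ LinearIndependent ℝ (fun α : Fin k => M α) := by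
      rw [hv]
      exact Y.mulVecLin.linearIndependent_iff hker
    rw [hb, hli, show (LinearIndependent ℝ fun α : Fin k => M α) ↔ IsUnit M from
      Matrix.linearIndependent_rows_iff_isUnit,
      Matrix.isUnit_iff_isUnit_det, isUnit_iff_ne_zero]
    tauto
end

section
/- Fix integers k ≥ 1 and m ≥ 1 and set n = m + k + 1. Let z ∈ ℝ^{m+k} be a column vector, let Z = (𝕀_{m+k} | z) be the (m+k) × n real matrix whose first m+k columns form the identity and whose last column is z (with columns Z₁, …, Z_n), and let Y be a k × (m+k) real matrix with rows Y₁, …, Y_k. Let A be the (k+1) × n real matrix whose first row is (−zᵀ, 1) and whose (α+1)-st row is (Y_α, 0) for α = 1, …, k. For j ∈ [n] let I_j = {j, …, j+k−1} (mod n, in [n]) and Ī_j = [n] \ I_j, let A^{I_j} be the (k+1) × k submatrix of A on columns I_j in increasing order, and define W^{I_j} ∈ ℝ^k by W^{I_j}_α = (−1)^α det(A^{I_j} with row α+1 deleted). For α ∈ [k] and an (m+1)-subset S ⊆ [n], set ⟨Y^⊥_α S⟩ := (−1)^{α−1} det of the (m+k) × (m+k) matrix whose columns are Y₁ᵀ,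 …, Y_kᵀ with Y_αᵀ omitted followed by Z_i for i ∈ S in increasing order, and ⟨Y S₁ ∩ ⋯ ∩ S_k⟩ := det of the k × k matrix with (α,β) entry ⟨Y^⊥_α S_β⟩. Then for every k-subset J = {j₁ < ⋯ < j_k} ⊆ [n] there exists a sign ε_J ∈ {+1, −1}, depending only on n, k, J and not on Y or z, such that for all Y and z: det(W^{I_{j₁}} | ⋯ | W^{I_{j_k}}) = ε_J · ⟨Y Ī_{j₁} ∩ ⋯ ∩ Ī_{j_k}⟩. In particular, the vectors W^{I_{j₁}}, …, W^{I_{j_k}} ∈ ℝ^k are linearly dependent if and only if ⟨Y Ī_{j₁} ∩ ⋯ ∩ Ī_{j_k}⟩ = 0. -/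
/-- The cyclic interval `I_j = {j, j+1, …, j+k-1}` (mod `n`) as a finset of `Fin n`. -/
def cyclicInterval {n : ℕ} [NeZero n] (k : ℕ) (hk : k ≤ n) (j : Fin n) :
    Finset (Fin n) :=
  Finset.image (fun t : Fin k => j + Fin.castLE hk t) Finset.univ

theorem cyclicInterval_card {n : ℕ} [NeZero n] (k : ℕ) (hk : k ≤ n) (j : Fin n) :
    (cyclicInterval k hk j).card = k := by
  unfold cyclicInterval
  rw [Finset.card_image_of_injective _
      (fun a b hab => Fin.castLE_injective hk (add_left_cancel hab)),
    Finset.card_univ, Fintype.card_fin]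

theorem cyclicInterval_compl_card {n : ℕ} [NeZero n] (k : ℕ) (hk : k ≤ n) (j : Fin n) :
    ((cyclicInterval k hk j)ᶜ).card = n - k := by
  rw [Finset.card_compl, cyclicInterval_card, Fintype.card_fin]

/-- The columns `Z₁, …, Z_n` of the matrix `Z = (𝕀_{m+k} | z)`. -/
def Zcols {m k : ℕ} (z : Fin (m + k) → ℝ) : Fin (m + k + 1) → Fin (m + k) → ℝ :=
  Fin.snoc (fun j : Fin (m + k) => fun r : Fin (m + k) => if r = j then 1 else 0) z

/-- The `(k+1) × n` matrix `A` with first row `(−zᵀ, 1)` and `(α+1)`-st row `(Y_α, 0)`. -/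
def Amat {m k : ℕ} (z : Fin (m + k) → ℝ) (Y : Matrix (Fin k) (Fin (m + k)) ℝ) :
    Matrix (Fin (k + 1)) (Fin (m + k + 1)) ℝ :=
  Matrix.of fun i : Fin (k + 1) =>
    Fin.cases (Fin.snoc (fun t : Fin (m + k) => -z t) (1 : ℝ))
      (fun a : Fin k => Fin.snoc (Y a) (0 : ℝ)) i

/-- The ray `W^{I_j} ∈ ℝ^k`, with `α`-th coordinate
`(−1)^α · det(A^{I_j} with row α+1 deleted)` (`α` 1-indexed in the paper; here
`a : Fin k` is 0-indexed, so the sign is `(−1)^{(a:ℕ)+1}`). -/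
noncomputable def Wray {m k : ℕ} (z : Fin (m + k) → ℝ)
    (Y : Matrix (Fin k) (Fin (m + k)) ℝ) (j : Fin (m + k + 1)) : Fin k → ℝ :=
  fun a => (-1 : ℝ) ^ ((a : ℕ) + 1) *
    (((Amat z Y).submatrix id
        ⇑((cyclicInterval k (by omega : k ≤ m + k + 1) j).orderEmbOfFin
          (cyclicInterval_card k (by omega) j))).submatrix
      (Fin.succAbove a.succ) id).det

/-- The covariant bracket `⟨Y^⊥_α S⟩` for an `(m+1)`-subset `S ⊆ [n]`:
`(−1)^{α−1}` times the determinant of the `(m+k) × (m+k)` matrix whose columns are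
`Y₁ᵀ, …, Y_kᵀ` with `Y_αᵀ` omitted, followed by the columns `Z_i`, `i ∈ S`, in
increasing order. -/
noncomputable def Ybr {m k : ℕ} (hk : 1 ≤ k) (z : Fin (m + k) → ℝ)
    (Y : Matrix (Fin k) (Fin (m + k)) ℝ) (α : Fin k)
    (S : Finset (Fin (m + k + 1))) (hS : S.card = m + 1) : ℝ :=
  (-1 : ℝ) ^ (α : ℕ) *
    (Matrix.of fun (r c : Fin (m + k)) =>
      Sum.elim (fun jj : Fin (k - 1) => Y (omitIdx hk α jj) r)
        (fun jj : Fin (m + 1) => Zcols z (S.orderEmbOfFin hS jj) r)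
        (finSumFinEquiv.symm
          (Fin.cast (by omega : m + k = k - 1 + (m + 1)) c))).det


/-! ### Auxiliary machinery for the proof -/

lemma succAbove_val' {N : ℕ} (a : Fin (N + 1)) (x : Fin N) :
    ((a.succAbove x : Fin (N + 1)) : ℕ) = if (x : ℕ) < (a : ℕ) then (x : ℕ) else (x : ℕ) + 1 := by
  rcases lt_or_ge ((x : ℕ)) ((a : ℕ)) with h | h
  · rw [Fin.succAbove_of_castSucc_lt _ _ (by simpa [Fin.lt_def] using h), if_pos h,
      Fin.coe_castSucc]
  · rw [Fin.succAbove_of_le_castSucc _ _ (by simpa [Fin.le_def] using h),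
      if_neg (not_lt.mpr h), Fin.val_succ]

def φmk (m k : ℕ) : Fin k ⊕ Fin (m + 1) ≃ Fin (m + k + 1) :=
  finSumFinEquiv.trans (finCongr (by omega))

lemma zrow_dot {m k : ℕ} (z : Fin (m + k) → ℝ) (p : Fin (m + k)) (v : Fin (m + k + 1) → ℝ) :
    (∑ t : Fin (m + k + 1), Zcols z t p * v t) = v p.castSucc + z p * v (Fin.last (m + k)) := by
  rw [Fin.sum_univ_castSucc]
  simp only [Zcols, Fin.snoc_castSucc, Fin.snoc_last]
  congr 1
  have h1 : ∀ t : Fin (m + k),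
      (if p = t then (1 : ℝ) else 0) * v t.castSucc = if p = t then v t.castSucc else 0 := by
    intro t; split_ifs <;> ring
  simp only [h1, Finset.sum_ite_eq, Finset.mem_univ, if_true]

lemma delta_dot {m k : ℕ} (z : Fin (m + k) → ℝ) (p : Fin (m + k)) (w : Fin (m + k + 1)) :
    (if (p.castSucc : Fin (m + k + 1)) = w then (1 : ℝ) else 0)
      + z p * (if Fin.last (m + k) = w then 1 else 0) = Zcols z w p := by
  induction w using Fin.lastCases with
  | last => simp [Zcols, Fin.snoc_last, (Fin.castSucc_lt_last p).ne]
  | cast u => simp [Zcols, Fin.snoc_castSucc, Fin.castSucc_inj, (Fin.castSucc_lt_last u).ne',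
      eq_comm]

/-- The order embedding enumerating `I_j`. -/
noncomputable def eEmb {m k : ℕ} (j : Fin (m + k + 1)) : Fin k → Fin (m + k + 1) :=
  ⇑((cyclicInterval k (by omega : k ≤ m + k + 1) j).orderEmbOfFin
      (cyclicInterval_card k (by omega) j))

/-- The order embedding enumerating the complement of `I_j`. -/
noncomputable def fEmb {m k : ℕ} (j : Fin (m + k + 1)) : Fin (m + 1) → Fin (m + k + 1) :=
  ⇑(((cyclicInterval k (by omega : k ≤ m + k + 1) j)ᶜ).orderEmbOfFin
      (by rw [cyclicInterval_compl_card]; omega))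

lemma eEmb_mem {m k : ℕ} (j : Fin (m + k + 1)) (i : Fin k) :
    eEmb j i ∈ cyclicInterval k (by omega : k ≤ m + k + 1) j :=
  Finset.orderEmbOfFin_mem _ _ i

lemma fEmb_not_mem {m k : ℕ} (j : Fin (m + k + 1)) (s : Fin (m + 1)) :
    fEmb j s ∉ cyclicInterval k (by omega : k ≤ m + k + 1) j := by
  have : fEmb j s ∈ (cyclicInterval k (by omega : k ≤ m + k + 1) j)ᶜ :=
    Finset.orderEmbOfFin_mem _ _ s
  simpa using this

lemma eEmb_ne_fEmb {m k : ℕ} (j : Fin (m + k + 1)) (i : Fin k) (s : Fin (m + 1)) :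
    eEmb j i ≠ fEmb j s := fun h => fEmb_not_mem j s (h ▸ eEmb_mem j i)

noncomputable def ψmk {m k : ℕ} (j : Fin (m + k + 1)) :
    Fin k ⊕ Fin (m + 1) ≃ Fin (m + k + 1) :=
  Equiv.ofBijective (Sum.elim (eEmb j) (fEmb j)) <| by
    refine (Fintype.bijective_iff_injective_and_card _).mpr ⟨?_, by simp; omega⟩
    rintro (i | s) (i' | s') h <;> simp only [Sum.elim_inl, Sum.elim_inr] at h
    · exact congrArg Sum.inl ((Finset.orderEmbOfFin _ _).injective h)
    · exact absurd h (eEmb_ne_fEmb j i s')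
    · exact absurd h.symm (eEmb_ne_fEmb j i' s)
    · exact congrArg Sum.inr ((Finset.orderEmbOfFin _ _).injective h)

/-- The sign of the column permutation associated with `j`. -/
noncomputable def sgnj (m k : ℕ) (j : Fin (m + k + 1)) : ℝ :=
  ((Equiv.Perm.sign ((ψmk j).trans (φmk m k).symm) : ℤ) : ℝ)

lemma sgnj_pm (m k : ℕ) (j : Fin (m + k + 1)) : sgnj m k j = 1 ∨ sgnj m k j = -1 := by
  rcases Int.units_eq_one_or (Equiv.Perm.sign ((ψmk j).trans (φmk m k).symm)) with h | h <;>
    simp [sgnj, h]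

lemma split_succ {m k : ℕ} (hk : 1 ≤ k) (h : m + k = k - 1 + (m + 1))
    (h' : k - 1 + 1 = k) (q : Fin (m + k)) :
    (φmk m k).symm q.succ =
      Sum.map (fun i : Fin (k - 1) => Fin.cast h' i.succ) id
        (finSumFinEquiv.symm (Fin.cast h q)) := by
  rw [Equiv.symm_apply_eq]
  have hw := finSumFinEquiv.apply_symm_apply (Fin.cast h q)
  cases hq : finSumFinEquiv.symm (Fin.cast h q) with
  | inl i =>
    rw [hq] at hw
    have hv : (q : ℕ) = (i : ℕ) := by
      have := congrArg Fin.val hw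
      simpa [finSumFinEquiv_apply_left] using this.symm
    apply Fin.ext
    simp [φmk, finSumFinEquiv_apply_left, hv]
  | inr s =>
    rw [hq] at hw
    have hv : (q : ℕ) = k - 1 + (s : ℕ) := by
      have := congrArg Fin.val hw
      simpa [finSumFinEquiv_apply_right] using this.symm
    apply Fin.ext
    simp [φmk, finSumFinEquiv_apply_right, hv]
    omega

lemma phi_symm_zero {m k : ℕ} (hk : 1 ≤ k) :
    (φmk m k).symm (0 : Fin (m + k + 1)) = Sum.inl (⟨0, hk⟩ : Fin k) := by
  rw [Equiv.symm_apply_eq]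
  apply Fin.ext
  simp [φmk, finSumFinEquiv_apply_left]

lemma succAbove_omit {k : ℕ} (hk : 1 ≤ k) (h' : k - 1 + 1 = k) (α : Fin k) (i : Fin (k - 1)) :
    α.succ.succAbove (Fin.cast h' i.succ) = (omitIdx hk α i).succ := by
  apply Fin.ext
  rw [succAbove_val']
  simp only [Fin.coe_cast, Fin.val_succ, omitIdx]
  rw [succAbove_val']
  simp only [Fin.coe_cast, Fin.val_succ]
  split_ifs <;> omega


section Core

variable {m k : ℕ}

/-- The `k × k` matrix `B` whose determinant gives `W^{I_j}_α`. -/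
noncomputable def Bmat (z : Fin (m + k) → ℝ) (Y : Matrix (Fin k) (Fin (m + k)) ℝ)
    (j : Fin (m + k + 1)) (α : Fin k) : Matrix (Fin k) (Fin k) ℝ :=
  ((Amat z Y).submatrix id (eEmb j)).submatrix (Fin.succAbove α.succ) id

lemma wray_eq (z : Fin (m + k) → ℝ) (Y : Matrix (Fin k) (Fin (m + k)) ℝ)
    (j : Fin (m + k + 1)) (α : Fin k) :
    Wray z Y j α = (-1 : ℝ) ^ ((α : ℕ) + 1) * (Bmat z Y j α).det := rfl

/-- The rows of the auxiliary `n × n` matrix `D`. -/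
noncomputable def DrowF (z : Fin (m + k) → ℝ) (Y : Matrix (Fin k) (Fin (m + k)) ℝ)
    (j : Fin (m + k + 1)) (α : Fin k) :
    Fin k ⊕ Fin (m + 1) → Fin (m + k + 1) → ℝ :=
  Sum.elim (fun i => Amat z Y (α.succ.succAbove i))
    (fun s c => if c = fEmb j s then 1 else 0)

noncomputable def Dmat (z : Fin (m + k) → ℝ) (Y : Matrix (Fin k) (Fin (m + k)) ℝ)
    (j : Fin (m + k + 1)) (α : Fin k) :
    Matrix (Fin (m + k + 1)) (Fin (m + k + 1)) ℝ :=
  Matrix.of fun r c => DrowF z Y j α ((φmk m k).symm r) c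

/-- The matrix whose determinant is `(−1)^α ⟨Y^⊥_α Ī_j⟩`. -/
noncomputable def Nmat (hk : 1 ≤ k) (h : m + k = k - 1 + (m + 1)) (z : Fin (m + k) → ℝ)
    (Y : Matrix (Fin k) (Fin (m + k)) ℝ) (j : Fin (m + k + 1)) (α : Fin k) :
    Matrix (Fin (m + k)) (Fin (m + k)) ℝ :=
  Matrix.of fun (r c : Fin (m + k)) =>
    Sum.elim (fun jj : Fin (k - 1) => Y (omitIdx hk α jj) r)
      (fun jj : Fin (m + 1) => Zcols z (fEmb j jj) r)
      (finSumFinEquiv.symm (Fin.cast h c))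

lemma ybr_eq (hk : 1 ≤ k) (h : m + k = k - 1 + (m + 1)) (z : Fin (m + k) → ℝ)
    (Y : Matrix (Fin k) (Fin (m + k)) ℝ) (j : Fin (m + k + 1)) (α : Fin k) :
    Ybr hk z Y α ((cyclicInterval k (by omega) j)ᶜ)
        (by rw [cyclicInterval_compl_card]; omega) =
      (-1 : ℝ) ^ (α : ℕ) * (Nmat hk h z Y j α).det := rfl

noncomputable def Zhat (z : Fin (m + k) → ℝ) :
    Matrix (Fin (m + k + 1)) (Fin (m + k + 1)) ℝ :=
  Matrix.of (Fin.cases (fun c => if c = Fin.last (m + k) then (1 : ℝ) else 0)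
    (fun p c => Zcols z c p))

lemma zhat_det (z : Fin (m + k) → ℝ) : (Zhat z).det = (-1 : ℝ) ^ (m + k) := by
  rw [Matrix.det_succ_row_zero]
  rw [Finset.sum_eq_single (Fin.last (m + k))]
  · have h0 : Zhat z 0 (Fin.last (m + k)) = 1 := by simp [Zhat]
    have hsub : (Zhat z).submatrix Fin.succ (Fin.last (m + k)).succAbove = 1 := by
      ext p q
      simp [Zhat, Fin.succAbove_last, Zcols, Fin.snoc_castSucc, Matrix.one_apply, eq_comm]
    rw [h0, hsub, Matrix.det_one, Fin.val_last, mul_one, mul_one]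
  · intro b _ hb
    have h0 : Zhat z 0 b = 0 := by simp [Zhat, hb]
    simp [h0]
  · simp

lemma det_DD (hk : 1 ≤ k) (z : Fin (m + k) → ℝ) (Y : Matrix (Fin k) (Fin (m + k)) ℝ)
    (j : Fin (m + k + 1)) (α : Fin k) :
    (Matrix.of fun r c => DrowF z Y j α r (Sum.elim (eEmb j) (fEmb j) c)).det =
      (Bmat z Y j α).det := by
  have hblock : (Matrix.of fun r c => DrowF z Y j α r (Sum.elim (eEmb j) (fEmb j) c)) =
      Matrix.fromBlocks (Bmat z Y j α)
        (Matrix.of fun i s => Amat z Y (α.succ.succAbove i) (fEmb j s)) 0 1 := by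
    ext r c
    rcases r with i | s <;> rcases c with i' | s'
    · rfl
    · rfl
    · show (if eEmb j i' = fEmb j s then (1 : ℝ) else 0) = Matrix.fromBlocks _ _ _ _ _ _
      rw [Matrix.fromBlocks_apply₂₁, if_neg (eEmb_ne_fEmb j i' s)]
      rfl
    · show (if fEmb j s' = fEmb j s then (1 : ℝ) else 0) = Matrix.fromBlocks _ _ _ _ _ _
      rw [Matrix.fromBlocks_apply₂₂, Matrix.one_apply]
      have hfinj : Function.Injective (fEmb j) :=
        (Finset.orderEmbOfFin _ _).injective
      by_cases hss : s = s'
      · simp [hss]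
      · rw [if_neg (fun hc => hss (hfinj hc).symm), if_neg hss]
  rw [hblock, Matrix.det_fromBlocks_zero₂₁, Matrix.det_one, mul_one]

lemma det_D (hk : 1 ≤ k) (z : Fin (m + k) → ℝ) (Y : Matrix (Fin k) (Fin (m + k)) ℝ)
    (j : Fin (m + k + 1)) (α : Fin k) :
    (Dmat z Y j α).det = sgnj m k j * (Bmat z Y j α).det := by
  have hperm : (Matrix.of fun r c => DrowF z Y j α r (Sum.elim (eEmb j) (fEmb j) c)) =
      ((Dmat z Y j α).submatrix ⇑(φmk m k) ⇑(φmk m k)).submatrix id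
        ⇑((ψmk j).trans (φmk m k).symm) := by
    ext r c
    simp [Dmat, ψmk, Matrix.submatrix_apply, Equiv.symm_apply_apply, Equiv.apply_symm_apply]
  have h1 : sgnj m k j * (Dmat z Y j α).det = (Bmat z Y j α).det := by
    rw [← det_DD hk z Y j α, hperm, Matrix.det_permute', Matrix.det_submatrix_equiv_self, sgnj]
  have hs2 : sgnj m k j * sgnj m k j = 1 := by
    rcases sgnj_pm m k j with h | h <;> rw [h] <;> norm_num
  calc (Dmat z Y j α).det = (sgnj m k j * sgnj m k j) * (Dmat z Y j α).det := by
        rw [hs2, one_mul]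
    _ = sgnj m k j * (sgnj m k j * (Dmat z Y j α).det) := by ring
    _ = sgnj m k j * (Bmat z Y j α).det := by rw [h1]

end Core


section Product

open Matrix

variable {m k : ℕ}

lemma Zhat_zero_apply (z : Fin (m + k) → ℝ) (t : Fin (m + k + 1)) :
    Zhat z 0 t = if t = Fin.last (m + k) then (1 : ℝ) else 0 := by simp [Zhat]

lemma Zhat_succ_apply (z : Fin (m + k) → ℝ) (p : Fin (m + k)) (t : Fin (m + k + 1)) :
    Zhat z p.succ t = Zcols z t p := by simp [Zhat]

lemma Amat_zero_apply (z : Fin (m + k) → ℝ) (Y : Matrix (Fin k) (Fin (m + k)) ℝ)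
    (t : Fin (m + k + 1)) :
    Amat z Y 0 t = (Fin.snoc (fun s : Fin (m + k) => -z s) (1 : ℝ) : Fin (m + k + 1) → ℝ) t := by
  simp [Amat]

lemma Amat_succ_apply (z : Fin (m + k) → ℝ) (Y : Matrix (Fin k) (Fin (m + k)) ℝ)
    (a : Fin k) (t : Fin (m + k + 1)) :
    Amat z Y a.succ t = (Fin.snoc (Y a) (0 : ℝ) : Fin (m + k + 1) → ℝ) t := by simp [Amat]

lemma Dmat_apply (z : Fin (m + k) → ℝ) (Y : Matrix (Fin k) (Fin (m + k)) ℝ)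
    (j : Fin (m + k + 1)) (α : Fin k) (r c : Fin (m + k + 1)) :
    Dmat z Y j α r c = DrowF z Y j α ((φmk m k).symm r) c := rfl

lemma DrowF_inl (z : Fin (m + k) → ℝ) (Y : Matrix (Fin k) (Fin (m + k)) ℝ)
    (j : Fin (m + k + 1)) (α : Fin k) (x : Fin k) (t : Fin (m + k + 1)) :
    DrowF z Y j α (Sum.inl x) t = Amat z Y (α.succ.succAbove x) t := rfl

lemma DrowF_inr (z : Fin (m + k) → ℝ) (Y : Matrix (Fin k) (Fin (m + k)) ℝ)
    (j : Fin (m + k + 1)) (α : Fin k) (s : Fin (m + 1)) (t : Fin (m + k + 1)) :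
    DrowF z Y j α (Sum.inr s) t = if t = fEmb j s then 1 else 0 := rfl

lemma Dmat_zero_row (hk : 1 ≤ k) (z : Fin (m + k) → ℝ) (Y : Matrix (Fin k) (Fin (m + k)) ℝ)
    (j : Fin (m + k + 1)) (α : Fin k) (t : Fin (m + k + 1)) :
    Dmat z Y j α 0 t = Amat z Y 0 t := by
  haveI : NeZero k := ⟨by omega⟩
  rw [Dmat_apply, phi_symm_zero hk, DrowF_inl]
  congr 2

lemma P00 (hk : 1 ≤ k) (z : Fin (m + k) → ℝ) (Y : Matrix (Fin k) (Fin (m + k)) ℝ)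
    (j : Fin (m + k + 1)) (α : Fin k) :
    (Zhat z * (Dmat z Y j α)ᵀ) 0 0 = 1 := by
  rw [Matrix.mul_apply]
  have h1 : ∀ t ∈ Finset.univ, Zhat z 0 t * (Dmat z Y j α)ᵀ t 0 =
      if t = Fin.last (m + k) then Dmat z Y j α 0 t else 0 := by
    intro t _
    rw [Matrix.transpose_apply, Zhat_zero_apply]
    split_ifs <;> ring
  rw [Finset.sum_congr rfl h1, Finset.sum_ite_eq', if_pos (Finset.mem_univ _),
    Dmat_zero_row hk, Amat_zero_apply, Fin.snoc_last]

lemma Ps0 (hk : 1 ≤ k) (z : Fin (m + k) → ℝ) (Y : Matrix (Fin k) (Fin (m + k)) ℝ)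
    (j : Fin (m + k + 1)) (α : Fin k) (p : Fin (m + k)) :
    (Zhat z * (Dmat z Y j α)ᵀ) p.succ 0 = 0 := by
  rw [Matrix.mul_apply]
  have h1 : ∀ t ∈ Finset.univ, Zhat z p.succ t * (Dmat z Y j α)ᵀ t 0 =
      Zcols z t p * Amat z Y 0 t := by
    intro t _
    rw [Matrix.transpose_apply, Zhat_succ_apply, Dmat_zero_row hk]
  rw [Finset.sum_congr rfl h1, zrow_dot, Amat_zero_apply, Amat_zero_apply,
    Fin.snoc_castSucc, Fin.snoc_last]
  ring

lemma Pss (hk : 1 ≤ k) (h : m + k = k - 1 + (m + 1)) (h' : k - 1 + 1 = k)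
    (z : Fin (m + k) → ℝ) (Y : Matrix (Fin k) (Fin (m + k)) ℝ)
    (j : Fin (m + k + 1)) (α : Fin k) (p q : Fin (m + k)) :
    (Zhat z * (Dmat z Y j α)ᵀ) p.succ q.succ = Nmat hk h z Y j α p q := by
  rw [Matrix.mul_apply]
  have h1 : ∀ t ∈ Finset.univ, Zhat z p.succ t * (Dmat z Y j α)ᵀ t q.succ =
      Zcols z t p * DrowF z Y j α ((φmk m k).symm q.succ) t := by
    intro t _
    rw [Matrix.transpose_apply, Zhat_succ_apply, Dmat_apply]
  rw [Finset.sum_congr rfl h1, split_succ hk h h' q]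
  unfold Nmat
  rw [Matrix.of_apply]
  cases hq : finSumFinEquiv.symm (Fin.cast h q) with
  | inl i =>
    simp only [Sum.map_inl, Sum.elim_inl]
    have h2 : ∀ t ∈ Finset.univ,
        Zcols z t p * DrowF z Y j α (Sum.inl (Fin.cast h' i.succ)) t =
          Zcols z t p * Amat z Y (omitIdx hk α i).succ t := by
      intro t _
      rw [DrowF_inl, succAbove_omit hk h' α i]
    rw [Finset.sum_congr rfl h2, zrow_dot, Amat_succ_apply, Amat_succ_apply,
      Fin.snoc_castSucc, Fin.snoc_last]
    ring
  | inr s =>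
    simp only [Sum.map_inr, id_eq, Sum.elim_inr]
    have h2 : ∀ t ∈ Finset.univ,
        Zcols z t p * DrowF z Y j α (Sum.inr s) t =
          Zcols z t p * (if t = fEmb j s then 1 else 0) := fun t _ => rfl
    rw [Finset.sum_congr rfl h2, zrow_dot]
    exact delta_dot z p (fEmb j s)

/-- The central determinant identity: `det N = (−1)^{m+k} · sgn_j · det B`. -/
lemma det_N (hk : 1 ≤ k) (h : m + k = k - 1 + (m + 1)) (h' : k - 1 + 1 = k)
    (z : Fin (m + k) → ℝ) (Y : Matrix (Fin k) (Fin (m + k)) ℝ)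
    (j : Fin (m + k + 1)) (α : Fin k) :
    (Nmat hk h z Y j α).det = (-1 : ℝ) ^ (m + k) * (sgnj m k j * (Bmat z Y j α).det) := by
  have hPdet : (Zhat z * (Dmat z Y j α)ᵀ).det = (Nmat hk h z Y j α).det := by
    rw [Matrix.det_succ_column_zero]
    rw [Finset.sum_eq_single (0 : Fin (m + k + 1))]
    · rw [P00 hk z Y j α]
      have hsub : (Zhat z * (Dmat z Y j α)ᵀ).submatrix (Fin.succAbove 0) Fin.succ =
          Nmat hk h z Y j α := by
        ext p q
        rw [Matrix.submatrix_apply, Fin.succAbove_zero]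
        exact Pss hk h h' z Y j α p q
      rw [hsub, Fin.val_zero, pow_zero, one_mul, one_mul]
    · intro b _ hb
      obtain ⟨p, rfl⟩ := Fin.eq_succ_of_ne_zero hb
      rw [Ps0 hk z Y j α p]
      ring
    · simp
  rw [← hPdet, Matrix.det_mul, Matrix.det_transpose, zhat_det, det_D hk z Y j α]

/-- The entrywise relation between the covariant bracket and the ray coordinates. -/
lemma entry_eq (hk : 1 ≤ k) (j : Fin (m + k + 1))
    (z : Fin (m + k) → ℝ) (Y : Matrix (Fin k) (Fin (m + k)) ℝ) (α : Fin k) :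
    Ybr hk z Y α ((cyclicInterval k (by omega) j)ᶜ)
        (by rw [cyclicInterval_compl_card]; omega) =
      ((-1 : ℝ) ^ (m + k + 1) * sgnj m k j) * Wray z Y j α := by
  have h : m + k = k - 1 + (m + 1) := by omega
  have h' : k - 1 + 1 = k := by omega
  rw [ybr_eq hk h z Y j α, det_N hk h h' z Y j α, wray_eq z Y j α, pow_succ, pow_succ]
  ring

end Product

/-- Theorem 5.4: for every `k`-subset `J = {j₁ < ⋯ < j_k}` of `[n]` (`n = m+k+1`) there is
a sign `ε` depending only on `n, k, J` such that for all `Y` and `z`,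
`det(W^{I_{j₁}} | ⋯ | W^{I_{j_k}}) = ε · ⟨Y Ī_{j₁} ∩ ⋯ ∩ Ī_{j_k}⟩`, where
`⟨Y S₁ ∩ ⋯ ∩ S_k⟩ = det(⟨Y^⊥_α S_β⟩)_{α,β}`. In particular the vectors
`W^{I_{j₁}}, …, W^{I_{j_k}}` are linearly dependent iff `⟨Y Ī_{j₁} ∩ ⋯ ∩ Ī_{j_k}⟩ = 0`. -/
theorem stmt_8 (k m : ℕ) (hk : 1 ≤ k) (hm : 1 ≤ m)
    (J : Finset (Fin (m + k + 1))) (hJ : J.card = k) :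
    ∃ ε : ℝ, (ε = 1 ∨ ε = -1) ∧
      ∀ (z : Fin (m + k) → ℝ) (Y : Matrix (Fin k) (Fin (m + k)) ℝ),
        (Matrix.of fun (a b : Fin k) =>
            Wray z Y (J.orderEmbOfFin hJ b) a).det =
          ε * (Matrix.of fun (α β : Fin k) =>
            Ybr hk z Y α ((cyclicInterval k (by omega) (J.orderEmbOfFin hJ β))ᶜ)
              (by rw [cyclicInterval_compl_card]; omega)).det ∧
        (¬ LinearIndependent ℝ
            (fun b : Fin k => Wray z Y (J.orderEmbOfFin hJ b)) ↔
          (Matrix.of fun (α β : Fin k) =>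
            Ybr hk z Y α ((cyclicInterval k (by omega) (J.orderEmbOfFin hJ β))ᶜ)
              (by rw [cyclicInterval_compl_card]; omega)).det = 0) := by
  classical
  set ε : ℝ := ∏ b : Fin k, ((-1 : ℝ) ^ (m + k + 1) * sgnj m k (J.orderEmbOfFin hJ b)) with hε
  have hεpm : ε = 1 ∨ ε = -1 := by
    rw [hε]
    refine Finset.prod_induction _ (fun x => x = 1 ∨ x = -1) ?_ (Or.inl rfl) ?_
    · rintro x y (hx | hx) (hy | hy) <;> rw [hx, hy] <;> norm_num
    · intro b _
      rcases neg_one_pow_eq_or ℝ (m + k + 1) with h1 | h1 <;>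
        rcases sgnj_pm m k (J.orderEmbOfFin hJ b) with h2 | h2 <;> rw [h1, h2] <;> norm_num
  have hεne : ε ≠ 0 := by rcases hεpm with h | h <;> rw [h] <;> norm_num
  have hε2 : ε * ε = 1 := by rcases hεpm with h | h <;> rw [h] <;> norm_num
  refine ⟨ε, hεpm, ?_⟩
  intro z Y
  have hMeq : (Matrix.of fun (α β : Fin k) =>
      Ybr hk z Y α ((cyclicInterval k (by omega) (J.orderEmbOfFin hJ β))ᶜ)
        (by rw [cyclicInterval_compl_card]; omega)) =
      (Matrix.of fun (a b : Fin k) => Wray z Y (J.orderEmbOfFin hJ b) a) *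
        Matrix.diagonal (fun b => (-1 : ℝ) ^ (m + k + 1) * sgnj m k (J.orderEmbOfFin hJ b)) := by
    ext α β
    rw [Matrix.mul_diagonal, Matrix.of_apply, Matrix.of_apply]
    exact (entry_eq hk (J.orderEmbOfFin hJ β) z Y α).trans (mul_comm _ _)
  have h1 : (Matrix.of fun (α β : Fin k) =>
      Ybr hk z Y α ((cyclicInterval k (by omega) (J.orderEmbOfFin hJ β))ᶜ)
        (by rw [cyclicInterval_compl_card]; omega)).det =
      (Matrix.of fun (a b : Fin k) => Wray z Y (J.orderEmbOfFin hJ b) a).det * ε := by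
    rw [hMeq, Matrix.det_mul, Matrix.det_diagonal, hε]
  have hiff : LinearIndependent ℝ (fun b : Fin k => Wray z Y (J.orderEmbOfFin hJ b)) ↔
      IsUnit (Matrix.transpose (Matrix.of fun (a b : Fin k) =>
        Wray z Y (J.orderEmbOfFin hJ b) a)) :=
    Matrix.linearIndependent_rows_iff_isUnit
  have g1 : (Matrix.of fun (a b : Fin k) => Wray z Y (J.orderEmbOfFin hJ b) a).det =
      ε * (Matrix.of fun (α β : Fin k) =>
        Ybr hk z Y α ((cyclicInterval k (by omega) (J.orderEmbOfFin hJ β))ᶜ)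
          (by rw [cyclicInterval_compl_card]; omega)).det := by
    rw [h1, show ε * ((Matrix.of fun (a b : Fin k) =>
        Wray z Y (J.orderEmbOfFin hJ b) a).det * ε) =
      (ε * ε) * (Matrix.of fun (a b : Fin k) =>
        Wray z Y (J.orderEmbOfFin hJ b) a).det from by ring, hε2, one_mul]
  have g2 : ¬ LinearIndependent ℝ (fun b : Fin k => Wray z Y (J.orderEmbOfFin hJ b)) ↔
      (Matrix.of fun (α β : Fin k) =>
        Ybr hk z Y α ((cyclicInterval k (by omega) (J.orderEmbOfFin hJ β))ᶜ)
          (by rw [cyclicInterval_compl_card]; omega)).det = 0 := by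
    rw [hiff, Matrix.isUnit_iff_isUnit_det, Matrix.det_transpose, isUnit_iff_ne_zero,
      not_ne_iff, h1, mul_eq_zero]
    simp [hεne]
  exact ⟨g1, g2⟩
end

section
/- Let Q ⊆ ℝⁿ be a nonempty compact convex set, π : ℝⁿ → ℝᵐ a linear map, and ψ : ℝⁿ → ℝ a linear functional such that for every x ∈ π(Q) the maximum of ψ over the fiber Q ∩ π⁻¹(x) is attained at a unique point s_ψ(x). Let Γ ⊆ Q be a nonempty compact convex subset (for example, a face of Q), and suppose that for some x₀ ∈ π(Q) the point s_ψ(x₀) belongs to the relative interior (intrinsic interior) of Γ. Then s_ψ(x) ∈ Γ for every x ∈ π(Γ). -/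
lemma extend_beyond_intrinsic {N : ℕ} {Γ : Set (Fin N → ℝ)} {p γ : Fin N → ℝ}
    (hp : p ∈ intrinsicInterior ℝ Γ) (hγ : γ ∈ Γ) :
    ∃ t : ℝ, 0 < t ∧ p + t • (p - γ) ∈ Γ := by
  rw [mem_intrinsicInterior] at hp
  obtain ⟨y, hy, hyp⟩ := hp
  have hγ' : γ ∈ affineSpan ℝ Γ := subset_affineSpan ℝ Γ hγ
  set c : ℝ → affineSpan ℝ Γ := fun t =>
    ⟨AffineMap.lineMap γ p t, AffineMap.lineMap_mem t hγ' (hyp ▸ y.2)⟩ with hc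
  have hcont : Continuous c := by
    apply Continuous.subtype_mk
    exact AffineMap.lineMap_continuous
  have hc1 : c 1 = y := by
    apply Subtype.ext
    simp [hc, hyp]
  have : c ⁻¹' interior ((↑) ⁻¹' Γ : Set (affineSpan ℝ Γ)) ∈ nhds (1 : ℝ) := by
    apply hcont.continuousAt.preimage_mem_nhds
    exact (isOpen_interior).mem_nhds (by rw [hc1]; exact hy)
  obtain ⟨ε, hε, hball⟩ := Metric.mem_nhds_iff.1 this
  refine ⟨ε / 2, by linarith, ?_⟩
  have hmem : c (1 + ε / 2) ∈ interior ((↑) ⁻¹' Γ : Set (affineSpan ℝ Γ)) := by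
    apply hball
    simp [Metric.mem_ball, Real.dist_eq, abs_of_nonneg, hε.le]
    linarith
  have hmemΓ' := interior_subset hmem
  rw [Set.mem_preimage] at hmemΓ'
  have hmemΓ : ((c (1 + ε / 2) : affineSpan ℝ Γ) : Fin N → ℝ) ∈ Γ := hmemΓ'
  have hval : ((c (1 + ε / 2) : affineSpan ℝ Γ) : Fin N → ℝ) = p + (ε / 2) • (p - γ) := by
    show (AffineMap.lineMap γ p) (1 + ε / 2) = p + (ε / 2) • (p - γ)
    simp only [AffineMap.lineMap_apply, vsub_eq_sub, vadd_eq_add]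
    module
  rwa [hval] at hmemΓ


/-- The key geometric claim in the proof of Theorem 2.5 (after Billera–Sturmfels): let
`Q ⊆ ℝⁿ` be a nonempty compact convex set, `π : ℝⁿ → ℝᵐ` linear, `ψ : ℝⁿ → ℝ` a linear
functional, and suppose for each `x ∈ π(Q)` the maximum of `ψ` over the fiber
`Q ∩ π⁻¹(x)` is attained at the unique point `s(x)`. If `Γ ⊆ Q` is a nonempty compact
convex subset and `s(x₀)` lies in the relative (intrinsic) interior of `Γ` for some
`x₀ ∈ π(Q)`, then `s(x) ∈ Γ` for every `x ∈ π(Γ)`. -/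
theorem stmt_13 (n m : ℕ) (Q : Set (Fin n → ℝ)) (hQne : Q.Nonempty)
    (hQc : IsCompact Q) (hQconv : Convex ℝ Q)
    (π : (Fin n → ℝ) →ₗ[ℝ] (Fin m → ℝ)) (ψ : (Fin n → ℝ) →ₗ[ℝ] ℝ)
    (s : (Fin m → ℝ) → (Fin n → ℝ))
    (hs : ∀ x ∈ π '' Q, s x ∈ Q ∧ π (s x) = x ∧
      ∀ q ∈ Q, π q = x → q ≠ s x → ψ q < ψ (s x))
    (Γ : Set (Fin n → ℝ)) (hΓQ : Γ ⊆ Q) (hΓne : Γ.Nonempty)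
    (hΓc : IsCompact Γ) (hΓconv : Convex ℝ Γ)
    (x₀ : Fin m → ℝ) (hx₀ : x₀ ∈ π '' Q)
    (hs₀ : s x₀ ∈ intrinsicInterior ℝ Γ) :
    ∀ x ∈ π '' Γ, s x ∈ Γ := by
  rintro x ⟨γ, hγΓ, rfl⟩
  set p := s x₀ with hp
  have hxQ : π γ ∈ π '' Q := ⟨γ, hΓQ hγΓ, rfl⟩
  obtain ⟨hyQ, hyπ, hymax⟩ := hs (π γ) hxQ
  obtain ⟨hpQ, hpπ, hpmax⟩ := hs x₀ hx₀
  by_contra hyΓ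
  have hyγ : s (π γ) ≠ γ := fun h => hyΓ (by rw [h]; exact hγΓ)
  have hψ : ψ γ < ψ (s (π γ)) := hymax γ (hΓQ hγΓ) rfl (Ne.symm hyγ)
  obtain ⟨t, ht, hz⟩ := extend_beyond_intrinsic hs₀ hγΓ
  set z := p + t • (p - γ) with hzdef
  set w := (1 / (1 + t)) • z + (t / (1 + t)) • s (π γ) with hw
  have h1t : (0:ℝ) < 1 + t := by linarith
  have hwQ : w ∈ Q := by
    rw [hw]
    exact hQconv (hΓQ hz) hyQ (by positivity) (by positivity) (by field_simp)
  have hwπ : π w = x₀ := by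
    have hπz : π z = x₀ + t • (x₀ - π γ) := by
      simp [hzdef, hp, map_add, map_smul, map_sub, hpπ]
    simp only [hw, map_add, map_smul, hπz, hyπ]
    have : (1:ℝ)/(1+t) * (1+t) = 1 := by field_simp
    funext i
    simp [Pi.add_apply, Pi.smul_apply, smul_eq_mul]
    field_simp
    ring
  have hψz : ψ z = ψ p + t * (ψ p - ψ γ) := by
    simp [hzdef, map_add, map_smul, map_sub, smul_eq_mul]
  have hψw : ψ p < ψ w := by
    have : ψ w = (1/(1+t)) * ψ z + (t/(1+t)) * ψ (s (π γ)) := by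
      simp [hw, map_add, map_smul, smul_eq_mul]
    rw [this, hψz, div_mul_eq_mul_div, div_mul_eq_mul_div, ← add_div, lt_div_iff₀ h1t]
    nlinarith
  rcases eq_or_ne w p with h | h
  · exact absurd (h ▸ hψw) (lt_irrefl _)
  · exact absurd hψw (not_lt.2 (hpmax w hwQ hwπ h).le)
end
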